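/- arXiv:2302.06119 — 2 statements merged into one kernel-verified Lean document; each statement's English description precedes it below -/
import Mathlib

section
/- (Equivalence of Vertex Profile) Let q' be a query labeled hypergraph whose vertex set equals the union of its hyperedges, let e_{q'} ∈ E(q') be a distinguished hyperedge, and let q'' be the hypergraph obtained from q' by removing e_{q'} (its vertex set being the union of the remaining hyperedges). Let g : E(q') → E(H) be an injective hyperedge assignment into a data labeled hypergraph H such that (a) the restriction of g to E(q'') is valid, i.e., realized by some embedding of q'' into H, and (b) |⋃_{e ∈ E(q')} e| = |⋃_{e ∈ E(q')} g(e)|. Write e_{m'} = g(e_{q'}). Then g is valid (i.e., realized by an embedding of q' into H with f(e) = g(e) for all e ∈ E(q')) if and only if the multiset { (l_q(u), {g(e) : e ∈ E(q'), u ∈ e}) : u ∈ e_{q'} } equals the multiset { (l_H(v), {g(e) : e ∈ E(q'), v ∈ g(e)}) : v ∈ e_{m'} }. -/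
lemma aux_mem_image_g_iff {α β : Type*} [DecidableEq α] [DecidableEq β]
    {Eq' : Finset (Finset α)} {g : Finset α → Finset β}
    (hginj : Set.InjOn g ↑Eq') {F : Finset (Finset α)} (hF : F ⊆ Eq')
    {e : Finset α} (he : e ∈ Eq') : g e ∈ F.image g ↔ e ∈ F := by
  constructor
  · intro h
    obtain ⟨e', he', hgee⟩ := Finset.mem_image.mp h
    rwa [← hginj (hF he') he hgee]
  · intro h; exact Finset.mem_image_of_mem g h

lemma aux_exists_map_of_map_eq {α β γ : Type*} [DecidableEq α] [DecidableEq β] [Nonempty β]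
    (S : Finset α) (T : Finset β) (p : α → γ) (P : β → γ)
    (h : S.val.map p = T.val.map P) :
    ∃ f : α → β, Set.InjOn f ↑S ∧ (∀ u ∈ S, f u ∈ T) ∧ (∀ u ∈ S, P (f u) = p u) := by
  induction S using Finset.cons_induction generalizing T with
  | empty =>
    exact ⟨fun _ => Classical.arbitrary β, by simp [Set.InjOn], by simp, by simp⟩
  | cons a S ha ih =>
    rw [Finset.cons_val, Multiset.map_cons] at h
    have hpa : p a ∈ T.val.map P := by rw [← h]; exact Multiset.mem_cons_self _ _
    obtain ⟨v, hvT, hPv⟩ := Multiset.mem_map.mp hpa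
    have hvT' : v ∈ T := hvT
    have hTval : T.val = v ::ₘ (T.erase v).val := by
      rw [Finset.erase_val]
      exact (Multiset.cons_erase hvT).symm
    rw [hTval, Multiset.map_cons, hPv] at h
    have h' : S.val.map p = (T.erase v).val.map P := (Multiset.cons_inj_right _).mp h
    obtain ⟨f0, hinj, hmem, hP⟩ := ih (T.erase v) h'
    refine ⟨Function.update f0 a v, ?_, ?_, ?_⟩
    · intro x hx y hy hxy
      simp only [Finset.coe_cons, Set.mem_insert_iff, Finset.mem_coe] at hx hy
      rcases hx with rfl | hx <;> rcases hy with rfl | hy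
      · rfl
      · exfalso
        rw [Function.update_self, Function.update_of_ne (ne_of_mem_of_not_mem hy ha) ] at hxy
        exact Finset.notMem_erase v T (hxy ▸ hmem y hy)
      · exfalso
        rw [Function.update_self, Function.update_of_ne (ne_of_mem_of_not_mem hx ha)] at hxy
        exact Finset.notMem_erase v T (hxy ▸ hmem x hx)
      · rw [Function.update_of_ne (ne_of_mem_of_not_mem hx ha), Function.update_of_ne (ne_of_mem_of_not_mem hy ha)] at hxy
        exact hinj hx hy hxy
    · intro u hu
      rcases Finset.mem_cons.mp hu with rfl | hu
      · rw [Function.update_self]; exact hvT'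
      · rw [Function.update_of_ne (ne_of_mem_of_not_mem hu ha)]
        exact Finset.mem_of_mem_erase (hmem u hu)
    · intro u hu
      rcases Finset.mem_cons.mp hu with rfl | hu
      · rw [Function.update_self]; exact hPv
      · rw [Function.update_of_ne (ne_of_mem_of_not_mem hu ha)]
        exact hP u hu



/-- A hyperedge assignment `g` on a collection `Es` of query hyperedges (with query labels `lq`
and data labels `lH`) is *valid* if it is realized by some embedding of the hypergraph with
hyperedge set `Es` (whose vertex set is the union of its hyperedges) into the data hypergraph:
an injective, label-preserving vertex map `f` with `f(e) = g(e)` for every `e ∈ Es`. -/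
def IsValidAssignment {α β L : Type*} [DecidableEq α] [DecidableEq β]
    (Es : Finset (Finset α)) (lq : α → L) (lH : β → L)
    (g : Finset α → Finset β) : Prop :=
  ∃ f : α → β, Set.InjOn f ↑(Es.biUnion id) ∧
    (∀ u ∈ Es.biUnion id, lH (f u) = lq u) ∧
    (∀ e ∈ Es, e.image f = g e)

/-- **Equivalence of Vertex Profile.**
Let `q'` be a query labeled hypergraph with hyperedges `Eq'` (its vertex set being the union
of its hyperedges) and distinguished hyperedge `e_q ∈ Eq'`, and let `q''` be obtained from `q'`
by removing `e_q`. Let `g` be an injective hyperedge assignment into the data hypergraph `H`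
such that (a) the restriction of `g` to `q''` is valid and (b) the number of vertices covered
by the query hyperedges equals the number of vertices covered by their images. Then `g` is
valid if and only if the multiset of vertex profiles of the vertices of `e_q` equals the
multiset of vertex profiles of the vertices of `e_{m'} = g(e_q)`. -/
theorem vertex_profile_equivalence
    {α β L : Type*} [DecidableEq α] [DecidableEq β]
    (Eq' : Finset (Finset α)) (lq : α → L)
    (EH : Finset (Finset β)) (lH : β → L)
    (hq_nonempty : ∀ e ∈ Eq', e.Nonempty)
    (hH_nonempty : ∀ e ∈ EH, e.Nonempty)
    (e_q : Finset α) (heq : e_q ∈ Eq')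
    (g : Finset α → Finset β)
    (hgE : ∀ e ∈ Eq', g e ∈ EH)
    (hginj : Set.InjOn g ↑Eq')
    (hvalid'' : IsValidAssignment (Eq'.erase e_q) lq lH g)
    (hcard : (Eq'.biUnion id).card = (Eq'.biUnion (fun e => g e)).card) :
    IsValidAssignment Eq' lq lH g ↔
      e_q.val.map (fun u => ((lq u : L), (Eq'.filter (fun e => u ∈ e)).image g))
        = (g e_q).val.map (fun v => ((lH v : L),
            (Eq'.filter (fun e => v ∈ g e)).image g)) := by
  classical
  obtain ⟨f'', hinj'', hlab'', himg''⟩ := hvalid''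
  set V'' : Finset α := (Eq'.erase e_q).biUnion id with hV''def
  set W'' : Finset β := (Eq'.erase e_q).biUnion (fun e => g e) with hW''def
  have hVeq : Eq'.biUnion id = e_q ∪ V'' := by
    conv_lhs => rw [← Finset.insert_erase heq]
    rw [Finset.biUnion_insert]
    rfl
  have heV'' : ∀ e ∈ Eq'.erase e_q, e ⊆ V'' := fun e he => Finset.subset_biUnion_of_mem id he
  have himW : V''.image f'' = W'' := by
    rw [hV''def, hW''def, Finset.biUnion_image]
    exact Finset.biUnion_congr rfl (fun e he => himg'' e he)
  have hW''mem : ∀ w ∈ V'', f'' w ∈ W'' := fun w hw => himW ▸ Finset.mem_image_of_mem f'' hw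
  have hmem'' : ∀ u ∈ V'', ∀ e ∈ Eq'.erase e_q, (f'' u ∈ g e ↔ u ∈ e) := by
    intro u hu e he
    rw [← himg'' e he]
    constructor
    · intro h
      obtain ⟨w, hw, hwu⟩ := Finset.mem_image.mp h
      rwa [← hinj'' (Finset.mem_coe.mpr (heV'' e he hw)) (Finset.mem_coe.mpr hu) hwu]
    · exact fun h => Finset.mem_image_of_mem _ h
  haveI : Nonempty α := ⟨(hq_nonempty e_q heq).choose⟩
  haveI : Nonempty β := ⟨(hH_nonempty (g e_q) (hgE e_q heq)).choose⟩
  set pq : α → L × Finset (Finset β) :=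
    fun u => (lq u, (Eq'.filter (fun e => u ∈ e)).image g) with hpqdef
  set pH : β → L × Finset (Finset β) :=
    fun v => (lH v, (Eq'.filter (fun e => v ∈ g e)).image g) with hpHdef
  constructor
  · -- forward direction
    rintro ⟨f, hfinj, hflab, hfimg⟩
    have hsub : e_q ⊆ Eq'.biUnion id := Finset.subset_biUnion_of_mem id heq
    have hval : (g e_q).val = e_q.val.map f := by
      rw [← hfimg e_q heq]
      exact Finset.image_val_of_injOn (hfinj.mono (Finset.coe_subset.mpr hsub))
    rw [hval, Multiset.map_map]
    refine Multiset.map_congr rfl ?_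
    intro u hu
    have huV : u ∈ Eq'.biUnion id := hsub (Finset.mem_val.mp hu)
    have h1 : lH (f u) = lq u := hflab u huV
    have h2 : Eq'.filter (fun e => u ∈ e) = Eq'.filter (fun e => f u ∈ g e) := by
      refine Finset.filter_congr ?_
      intro e he
      constructor
      · intro h; rw [← hfimg e he]; exact Finset.mem_image_of_mem f h
      · intro h
        rw [← hfimg e he] at h
        obtain ⟨w, hw, hwu⟩ := Finset.mem_image.mp h
        have := hfinj (Finset.mem_coe.mpr (Finset.subset_biUnion_of_mem id he hw))
          (Finset.mem_coe.mpr huV) hwu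
        rwa [← this]
    simp only [hpqdef, hpHdef, Function.comp_apply, h1, h2]
  · -- backward direction
    intro hprof
    set Q : α → L × Finset (Finset β) :=
      fun u => (lq u, ((Eq'.erase e_q).filter (fun e => u ∈ e)).image g) with hQdef
    set R : β → L × Finset (Finset β) :=
      fun v => (lH v, ((Eq'.erase e_q).filter (fun e => v ∈ g e)).image g) with hRdef
    -- singleton profile characterizations
    have h1 : ∀ u ∈ e_q, ((pq u).2 = {g e_q} ↔ u ∉ V'') := by
      intro u hu
      constructor
      · intro hset huV
        obtain ⟨e₀, he₀, hue₀⟩ := Finset.mem_biUnion.mp huV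
        have hge₀ : g e₀ ∈ (pq u).2 :=
          Finset.mem_image_of_mem g
            (Finset.mem_filter.mpr ⟨Finset.mem_of_mem_erase he₀, hue₀⟩)
        rw [hset, Finset.mem_singleton] at hge₀
        exact (Finset.ne_of_mem_erase he₀)
          (hginj (Finset.mem_coe.mpr (Finset.mem_of_mem_erase he₀)) (Finset.mem_coe.mpr heq) hge₀)
      · intro huV
        have hfil : Eq'.filter (fun e => u ∈ e) = {e_q} := by
          apply Finset.eq_singleton_iff_unique_mem.mpr
          refine ⟨Finset.mem_filter.mpr ⟨heq, hu⟩, ?_⟩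
          intro e he
          obtain ⟨heE, hue⟩ := Finset.mem_filter.mp he
          by_contra hne
          exact huV (Finset.mem_biUnion.mpr ⟨e, Finset.mem_erase.mpr ⟨hne, heE⟩, hue⟩)
        show (Eq'.filter (fun e => u ∈ e)).image g = {g e_q}
        rw [hfil, Finset.image_singleton]
    have h2 : ∀ v ∈ g e_q, ((pH v).2 = {g e_q} ↔ v ∉ W'') := by
      intro v hv
      constructor
      · intro hset hvW
        obtain ⟨e₀, he₀, hve₀⟩ := Finset.mem_biUnion.mp hvW
        have hge₀ : g e₀ ∈ (pH v).2 :=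
          Finset.mem_image_of_mem g
            (Finset.mem_filter.mpr ⟨Finset.mem_of_mem_erase he₀, hve₀⟩)
        rw [hset, Finset.mem_singleton] at hge₀
        exact (Finset.ne_of_mem_erase he₀)
          (hginj (Finset.mem_coe.mpr (Finset.mem_of_mem_erase he₀)) (Finset.mem_coe.mpr heq) hge₀)
      · intro hvW
        have hfil : Eq'.filter (fun e => v ∈ g e) = {e_q} := by
          apply Finset.eq_singleton_iff_unique_mem.mpr
          refine ⟨Finset.mem_filter.mpr ⟨heq, hv⟩, ?_⟩
          intro e he
          obtain ⟨heE, hve⟩ := Finset.mem_filter.mp he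
          by_contra hne
          exact hvW (Finset.mem_biUnion.mpr ⟨e, Finset.mem_erase.mpr ⟨hne, heE⟩, hve⟩)
        show (Eq'.filter (fun e => v ∈ g e)).image g = {g e_q}
        rw [hfil, Finset.image_singleton]
    -- split the profile equality
    have hDE : (e_q.filter (fun u => u ∉ V'')).val.map pq
        = ((g e_q).filter (fun v => v ∉ W'')).val.map pH := by
      have h := congrArg (Multiset.filter (fun c : L × Finset (Finset β) => c.2 = {g e_q})) hprof
      rw [Multiset.filter_map, Multiset.filter_map] at h
      have e1 : Multiset.filter ((fun c : L × Finset (Finset β) => c.2 = {g e_q}) ∘ pq) e_q.val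
          = Multiset.filter (fun u => u ∉ V'') e_q.val :=
        Multiset.filter_congr (fun u hu => h1 u hu)
      have e2 : Multiset.filter ((fun c : L × Finset (Finset β) => c.2 = {g e_q}) ∘ pH) (g e_q).val
          = Multiset.filter (fun v => v ∉ W'') (g e_q).val :=
        Multiset.filter_congr (fun v hv => h2 v hv)
      rw [e1, e2] at h
      rw [Finset.filter_val, Finset.filter_val]
      convert h using 2
    have hAB : (e_q.filter (fun u => u ∈ V'')).val.map pq
        = ((g e_q).filter (fun v => v ∈ W'')).val.map pH := by
      have h := congrArg (Multiset.filter (fun c : L × Finset (Finset β) => ¬ c.2 = {g e_q})) hprof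
      rw [Multiset.filter_map, Multiset.filter_map] at h
      have e1 : Multiset.filter ((fun c : L × Finset (Finset β) => ¬ c.2 = {g e_q}) ∘ pq) e_q.val
          = Multiset.filter (fun u => u ∈ V'') e_q.val :=
        Multiset.filter_congr (fun u hu => by
          simpa using not_iff_not.mpr (h1 u hu))
      have e2 : Multiset.filter ((fun c : L × Finset (Finset β) => ¬ c.2 = {g e_q}) ∘ pH) (g e_q).val
          = Multiset.filter (fun v => v ∈ W'') (g e_q).val :=
        Multiset.filter_congr (fun v hv => by
          simpa using not_iff_not.mpr (h2 v hv))
      rw [e1, e2] at h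
      rw [Finset.filter_val, Finset.filter_val]
      convert h using 2
    -- relate pq to Q on e_q and pH to R on g e_q
    have hgnot : ∀ u : α, g e_q ∉ ((Eq'.erase e_q).filter (fun e => u ∈ e)).image g := by
      intro u h
      obtain ⟨e', he', hge'⟩ := Finset.mem_image.mp h
      obtain ⟨he'1, _⟩ := Finset.mem_filter.mp he'
      exact (Finset.ne_of_mem_erase he'1)
        (hginj (Finset.mem_coe.mpr (Finset.mem_of_mem_erase he'1)) (Finset.mem_coe.mpr heq) hge')
    have hgnot' : ∀ v : β, g e_q ∉ ((Eq'.erase e_q).filter (fun e => v ∈ g e)).image g := by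
      intro v h
      obtain ⟨e', he', hge'⟩ := Finset.mem_image.mp h
      obtain ⟨he'1, _⟩ := Finset.mem_filter.mp he'
      exact (Finset.ne_of_mem_erase he'1)
        (hginj (Finset.mem_coe.mpr (Finset.mem_of_mem_erase he'1)) (Finset.mem_coe.mpr heq) hge')
    have hpqA : ∀ u ∈ e_q, ((pq u).1, (pq u).2.erase (g e_q)) = Q u := by
      intro u hu
      have hfil : Eq'.filter (fun e => u ∈ e)
          = insert e_q ((Eq'.erase e_q).filter (fun e => u ∈ e)) := by
        ext e
        simp only [Finset.mem_filter, Finset.mem_insert, Finset.mem_erase]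
        constructor
        · rintro ⟨heE, hue⟩
          by_cases h : e = e_q
          · exact Or.inl h
          · exact Or.inr ⟨⟨h, heE⟩, hue⟩
        · rintro (rfl | ⟨⟨_, heE⟩, hue⟩)
          · exact ⟨heq, hu⟩
          · exact ⟨heE, hue⟩
      show (lq u, ((Eq'.filter (fun e => u ∈ e)).image g).erase (g e_q)) = Q u
      rw [hfil, Finset.image_insert, Finset.erase_insert (hgnot u), hQdef]
    have hpHB : ∀ v ∈ g e_q, ((pH v).1, (pH v).2.erase (g e_q)) = R v := by
      intro v hv
      have hfil : Eq'.filter (fun e => v ∈ g e)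
          = insert e_q ((Eq'.erase e_q).filter (fun e => v ∈ g e)) := by
        ext e
        simp only [Finset.mem_filter, Finset.mem_insert, Finset.mem_erase]
        constructor
        · rintro ⟨heE, hve⟩
          by_cases h : e = e_q
          · exact Or.inl h
          · exact Or.inr ⟨⟨h, heE⟩, hve⟩
        · rintro (rfl | ⟨⟨_, heE⟩, hve⟩)
          · exact ⟨heq, hv⟩
          · exact ⟨heE, hve⟩
      show (lH v, ((Eq'.filter (fun e => v ∈ g e)).image g).erase (g e_q)) = R v
      rw [hfil, Finset.image_insert, Finset.erase_insert (hgnot' v), hRdef]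
    have hABQ : (e_q.filter (fun u => u ∈ V'')).val.map Q
        = ((g e_q).filter (fun v => v ∈ W'')).val.map R := by
      calc (e_q.filter (fun u => u ∈ V'')).val.map Q
          = (e_q.filter (fun u => u ∈ V'')).val.map
            ((fun c : L × Finset (Finset β) => (c.1, c.2.erase (g e_q))) ∘ pq) := by
            refine Multiset.map_congr rfl ?_
            intro u hu
            exact (hpqA u (Finset.mem_filter.mp (Finset.mem_val.mp hu)).1).symm
        _ = ((g e_q).filter (fun v => v ∈ W'')).val.map
            ((fun c : L × Finset (Finset β) => (c.1, c.2.erase (g e_q))) ∘ pH) := by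
            rw [← Multiset.map_map, hAB, Multiset.map_map]
        _ = ((g e_q).filter (fun v => v ∈ W'')).val.map R := by
            refine Multiset.map_congr rfl ?_
            intro v hv
            exact hpHB v (Finset.mem_filter.mp (Finset.mem_val.mp hv)).1
    set B'' : Finset α := V''.filter (fun u => f'' u ∈ g e_q) with hB''def
    have hBimg : ((g e_q).filter (fun v => v ∈ W'')) = B''.image f'' := by
      ext v
      constructor
      · intro hv
        obtain ⟨hv1, hv2⟩ := Finset.mem_filter.mp hv
        rw [← himW] at hv2
        obtain ⟨u, hu, rfl⟩ := Finset.mem_image.mp hv2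
        exact Finset.mem_image_of_mem f'' (Finset.mem_filter.mpr ⟨hu, hv1⟩)
      · intro hv
        obtain ⟨u, hu, rfl⟩ := Finset.mem_image.mp hv
        obtain ⟨hu1, hu2⟩ := Finset.mem_filter.mp hu
        exact Finset.mem_filter.mpr ⟨hu2, hW''mem u hu1⟩
    have hRQ : ∀ u ∈ V'', R (f'' u) = Q u := by
      intro u hu
      show (lH (f'' u), _) = (lq u, _)
      rw [hlab'' u hu]
      refine Prod.ext rfl ?_
      show ((Eq'.erase e_q).filter (fun e => f'' u ∈ g e)).image g
        = ((Eq'.erase e_q).filter (fun e => u ∈ e)).image g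
      refine congrArg (Finset.image g) (Finset.filter_congr ?_)
      intro e he
      exact hmem'' u hu e he
    have hABQ2 : (V''.filter (fun u => u ∈ e_q)).val.map Q = B''.val.map Q := by
      have hAA : e_q.filter (fun u => u ∈ V'') = V''.filter (fun u => u ∈ e_q) := by
        ext u; simp only [Finset.mem_filter]; exact and_comm
      rw [← hAA, hABQ, hBimg,
        Finset.image_val_of_injOn (hinj''.mono (by
          intro x hx
          exact Finset.mem_coe.mpr (Finset.mem_filter.mp (Finset.mem_coe.mp hx)).1)),
        Multiset.map_map]
      refine Multiset.map_congr rfl ?_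
      intro u hu
      exact hRQ u (Finset.mem_filter.mp (Finset.mem_val.mp hu)).1
    have hcompl : (V''.filter (fun u => ¬ u ∈ e_q)).val.map Q
        = (V''.filter (fun u => ¬ f'' u ∈ g e_q)).val.map Q := by
      have hs1 : (V''.filter (fun u => u ∈ e_q)).val.map Q
          + (V''.filter (fun u => ¬ u ∈ e_q)).val.map Q = V''.val.map Q := by
        rw [← Multiset.map_add, Finset.filter_val, Finset.filter_val, Multiset.filter_add_not]
      have hs2 : B''.val.map Q
          + (V''.filter (fun u => ¬ f'' u ∈ g e_q)).val.map Q = V''.val.map Q := by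
        rw [← Multiset.map_add, hB''def, Finset.filter_val, Finset.filter_val,
          Multiset.filter_add_not]
      have h3 := hs1.trans hs2.symm
      rw [hABQ2] at h3
      exact add_left_cancel h3
    obtain ⟨τ, hτinj, hτmem, hτQ⟩ :=
      aux_exists_map_of_map_eq (V''.filter (fun u => u ∈ e_q)) B'' Q Q hABQ2
    obtain ⟨τ', hτ'inj, hτ'mem, hτ'Q⟩ :=
      aux_exists_map_of_map_eq (V''.filter (fun u => ¬ u ∈ e_q))
        (V''.filter (fun u => ¬ f'' u ∈ g e_q)) Q Q hcompl
    obtain ⟨σ, hσinj, hσmem, hσp⟩ :=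
      aux_exists_map_of_map_eq (e_q.filter (fun u => u ∉ V''))
        ((g e_q).filter (fun v => v ∉ W'')) pq pH hDE
    have hQmem : ∀ u w, Q w = Q u → ∀ e ∈ Eq'.erase e_q, (w ∈ e ↔ u ∈ e) := by
      intro u w hQeq e he
      have hq2 : ((Eq'.erase e_q).filter (fun e => w ∈ e)).image g
          = ((Eq'.erase e_q).filter (fun e => u ∈ e)).image g := by
        have := congrArg Prod.snd hQeq
        simpa [hQdef] using this
      have hsubw : (Eq'.erase e_q).filter (fun e => w ∈ e) ⊆ Eq' :=
        (Finset.filter_subset _ _).trans (Finset.erase_subset _ _)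
      have hsubu : (Eq'.erase e_q).filter (fun e => u ∈ e) ⊆ Eq' :=
        (Finset.filter_subset _ _).trans (Finset.erase_subset _ _)
      have heE : e ∈ Eq' := Finset.mem_of_mem_erase he
      constructor
      · intro hw
        have hm : g e ∈ ((Eq'.erase e_q).filter (fun e => w ∈ e)).image g :=
          Finset.mem_image_of_mem g (Finset.mem_filter.mpr ⟨he, hw⟩)
        rw [hq2] at hm
        exact (Finset.mem_filter.mp ((aux_mem_image_g_iff hginj hsubu heE).mp hm)).2
      · intro hu
        have hm : g e ∈ ((Eq'.erase e_q).filter (fun e => u ∈ e)).image g :=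
          Finset.mem_image_of_mem g (Finset.mem_filter.mpr ⟨he, hu⟩)
        rw [← hq2] at hm
        exact (Finset.mem_filter.mp ((aux_mem_image_g_iff hginj hsubw heE).mp hm)).2
    have hQlab : ∀ u w, Q w = Q u → lq w = lq u := by
      intro u w hQeq
      have := congrArg Prod.fst hQeq
      simpa [hQdef] using this
    -- the glued map
    set f : α → β := fun u =>
      if u ∈ V'' then (if u ∈ e_q then f'' (τ u) else f'' (τ' u)) else σ u with hfdef
    have hτB : ∀ u, u ∈ V'' → u ∈ e_q → τ u ∈ V'' ∧ f'' (τ u) ∈ g e_q := by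
      intro u hu1 hu2
      have h := hτmem u (Finset.mem_filter.mpr ⟨hu1, hu2⟩)
      exact ⟨(Finset.mem_filter.mp h).1, (Finset.mem_filter.mp h).2⟩
    have hτ'B : ∀ u, u ∈ V'' → u ∉ e_q → τ' u ∈ V'' ∧ f'' (τ' u) ∉ g e_q := by
      intro u hu1 hu2
      have h := hτ'mem u (Finset.mem_filter.mpr ⟨hu1, hu2⟩)
      exact ⟨(Finset.mem_filter.mp h).1, (Finset.mem_filter.mp h).2⟩
    have hσB : ∀ u, u ∈ e_q → u ∉ V'' → σ u ∈ g e_q ∧ σ u ∉ W'' := by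
      intro u hu1 hu2
      have h := hσmem u (Finset.mem_filter.mpr ⟨hu1, hu2⟩)
      exact ⟨(Finset.mem_filter.mp h).1, (Finset.mem_filter.mp h).2⟩
    have hfW : ∀ u ∈ V'', f u ∈ W'' := by
      intro u hu
      rw [hfdef]
      simp only [if_pos hu]
      split
      · exact hW''mem _ (hτB u hu (by assumption)).1
      · exact hW''mem _ (hτ'B u hu (by assumption)).1
    have hfinj : Set.InjOn f ↑(Eq'.biUnion id) := by
      intro x hx y hy hxy
      rw [Finset.mem_coe, hVeq, Finset.mem_union] at hx hy
      by_cases hxV : x ∈ V'' <;> by_cases hyV : y ∈ V''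
      · by_cases hxe : x ∈ e_q <;> by_cases hye : y ∈ e_q
        · rw [hfdef] at hxy
          simp only [if_pos hxV, if_pos hyV, if_pos hxe, if_pos hye] at hxy
          have h1 := (hτB x hxV hxe).1
          have h2 := (hτB y hyV hye).1
          have := hinj'' (Finset.mem_coe.mpr h1) (Finset.mem_coe.mpr h2) hxy
          exact hτinj (Finset.mem_coe.mpr (Finset.mem_filter.mpr ⟨hxV, hxe⟩))
            (Finset.mem_coe.mpr (Finset.mem_filter.mpr ⟨hyV, hye⟩)) this
        · exfalso
          rw [hfdef] at hxy
          simp only [if_pos hxV, if_pos hyV, if_pos hxe, if_neg hye] at hxy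
          exact (hτ'B y hyV hye).2 (hxy ▸ (hτB x hxV hxe).2)
        · exfalso
          rw [hfdef] at hxy
          simp only [if_pos hxV, if_pos hyV, if_neg hxe, if_pos hye] at hxy
          exact (hτ'B x hxV hxe).2 (hxy ▸ (hτB y hyV hye).2)
        · rw [hfdef] at hxy
          simp only [if_pos hxV, if_pos hyV, if_neg hxe, if_neg hye] at hxy
          have h1 := (hτ'B x hxV hxe).1
          have h2 := (hτ'B y hyV hye).1
          have := hinj'' (Finset.mem_coe.mpr h1) (Finset.mem_coe.mpr h2) hxy
          exact hτ'inj (Finset.mem_coe.mpr (Finset.mem_filter.mpr ⟨hxV, hxe⟩))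
            (Finset.mem_coe.mpr (Finset.mem_filter.mpr ⟨hyV, hye⟩)) this
      · exfalso
        have hye : y ∈ e_q := hy.resolve_right hyV
        have h1 : f x ∈ W'' := hfW x hxV
        have h2 : f y ∉ W'' := by
          rw [hfdef]; simp only [if_neg hyV]; exact (hσB y hye hyV).2
        exact h2 (hxy ▸ h1)
      · exfalso
        have hxe : x ∈ e_q := hx.resolve_right hxV
        have h1 : f y ∈ W'' := hfW y hyV
        have h2 : f x ∉ W'' := by
          rw [hfdef]; simp only [if_neg hxV]; exact (hσB x hxe hxV).2
        exact h2 (hxy ▸ h1)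
      · have hxe : x ∈ e_q := hx.resolve_right hxV
        have hye : y ∈ e_q := hy.resolve_right hyV
        rw [hfdef] at hxy
        simp only [if_neg hxV, if_neg hyV] at hxy
        exact hσinj (Finset.mem_coe.mpr (Finset.mem_filter.mpr ⟨hxe, hxV⟩))
          (Finset.mem_coe.mpr (Finset.mem_filter.mpr ⟨hye, hyV⟩)) hxy
    have hflab : ∀ u ∈ Eq'.biUnion id, lH (f u) = lq u := by
      intro u hu
      rw [hVeq, Finset.mem_union] at hu
      by_cases huV : u ∈ V''
      · by_cases hue : u ∈ e_q
        · rw [hfdef]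
          simp only [if_pos huV, if_pos hue]
          have hτu := (hτB u huV hue).1
          rw [hlab'' (τ u) hτu]
          exact hQlab u (τ u) (hτQ u (Finset.mem_filter.mpr ⟨huV, hue⟩))
        · rw [hfdef]
          simp only [if_pos huV, if_neg hue]
          have hτ'u := (hτ'B u huV hue).1
          rw [hlab'' (τ' u) hτ'u]
          exact hQlab u (τ' u) (hτ'Q u (Finset.mem_filter.mpr ⟨huV, hue⟩))
      · have hue : u ∈ e_q := hu.resolve_right huV
        rw [hfdef]
        simp only [if_neg huV]
        have := hσp u (Finset.mem_filter.mpr ⟨hue, huV⟩)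
        have := congrArg Prod.fst this
        simpa [hpqdef, hpHdef] using this
    refine ⟨f, hfinj, hflab, ?_⟩
    intro e he
    by_cases hee : e = e_q
    · subst hee
      have hsubgoal : e.image f ⊆ g e := by
        intro v hv
        obtain ⟨u, hu, rfl⟩ := Finset.mem_image.mp hv
        by_cases huV : u ∈ V''
        · rw [hfdef]
          simp only [if_pos huV, if_pos hu]
          exact (hτB u huV hu).2
        · rw [hfdef]
          simp only [if_neg huV]
          exact (hσB u hu huV).1
      have hcards : e.card = (g e).card := by
        have h := congrArg Multiset.card hprof
        simp only [Multiset.card_map] at h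
        exact h
      have hinje : Set.InjOn f ↑e :=
        hfinj.mono (Finset.coe_subset.mpr (Finset.subset_biUnion_of_mem id he))
      refine Finset.eq_of_subset_of_card_le hsubgoal ?_
      rw [Finset.card_image_of_injOn hinje, hcards]
    · have heE : e ∈ Eq'.erase e_q := Finset.mem_erase.mpr ⟨hee, he⟩
      have hesub : e ⊆ V'' := heV'' e heE
      have hsubgoal : e.image f ⊆ g e := by
        intro v hv
        obtain ⟨u, hu, rfl⟩ := Finset.mem_image.mp hv
        have huV : u ∈ V'' := hesub hu
        by_cases hue : u ∈ e_q
        · rw [hfdef]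
          simp only [if_pos huV, if_pos hue]
          have hτe : τ u ∈ e :=
            (hQmem u (τ u) (hτQ u (Finset.mem_filter.mpr ⟨huV, hue⟩)) e heE).mpr hu
          rw [← himg'' e heE]
          exact Finset.mem_image_of_mem f'' hτe
        · rw [hfdef]
          simp only [if_pos huV, if_neg hue]
          have hτ'e : τ' u ∈ e :=
            (hQmem u (τ' u) (hτ'Q u (Finset.mem_filter.mpr ⟨huV, hue⟩)) e heE).mpr hu
          rw [← himg'' e heE]
          exact Finset.mem_image_of_mem f'' hτ'e
      have hinje : Set.InjOn f ↑e :=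
        hfinj.mono (Finset.coe_subset.mpr (Finset.subset_biUnion_of_mem id he))
      have hcards : (g e).card ≤ (e.image f).card := by
        rw [Finset.card_image_of_injOn hinje, ← himg'' e heE,
          Finset.card_image_of_injOn (hinj''.mono (Finset.coe_subset.mpr hesub))]
      exact Finset.eq_of_subset_of_card_le hsubgoal hcards
end

section
/- (Completeness of candidate generation) Let f be an embedding of a query labeled hypergraph q into a data labeled hypergraph H, let φ be a matching order (a permutation of E(q)), let e_q = φ[i] be the hyperedge currently being matched, and let q' be the partial query consisting of the hyperedges φ[1..i]. Then the candidate c = f(e_q) satisfies all of the following filter conditions: (i) S(c) = S(e_q), i.e., the multiset of labels of the vertices of c equals the multiset of labels of the vertices of e_q; (ii) c contains no vertex of V_{n_incdt} = ⋃ { f(e) : e ∈ E(q), e matched before e_q in φ, e ∩ e_q = ∅ }; and (iii) for every hyperedge e matched before e_q in φ with e ∩ e_q ≠ ∅ and every u ∈ e ∩ e_q, there exists a vertex v ∈ f(e) with v ∈ c, v ∉ V_{n_incdt}, l_H(v) = l_q(u), and the degree of v in the hypergraph with hyperedge set { f(e') : e' ∈ E(q'), e' matched up to step i } equals the degree of u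 in q'. Consequently c belongs to the candidate set C(e_q) computed as the intersection, over all such pairs (e, u), of the unions ⋃_{v ∈ V_incdt(u)} he(v, S(e_q)), where V_incdt(u) is the set of vertices of f(e) not in V_{n_incdt} whose label equals l_q(u) and whose degree in the matched hypergraph equals the degree of u in q', and he(v, s) is the set of hyperedges of H incident to v with signature s. -/
/-- **Completeness of candidate generation.**
Let `f` be an embedding of a query labeled hypergraph `q` into a data labeled hypergraph `H`,
let `φ` be a matching order (a permutation of `E(q)`), let `e_q = φ[i]` be the hyperedge
currently being matched, and let the partial query `q'` consist of the hyperedges up to and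
including `e_q`. Then the candidate `c = f(e_q)`:
(i) has the same signature as `e_q`;
(ii) contains no vertex of `V_{n_incdt}` (images of previously matched hyperedges disjoint
from `e_q`);
(iii) for every previously matched hyperedge `e` adjacent to `e_q` and every `u ∈ e ∩ e_q`,
there is `v ∈ f(e)` with `v ∈ c`, `v ∉ V_{n_incdt}`, matching label, and matching degree in
the matched partial hypergraph; and consequently
(iv) `c` lies in every set `⋃_{v ∈ V_incdt(e,u)} he(v, S(e_q))`, i.e. `c` is in the computed
candidate set `C(e_q)`. -/
theorem candidate_generation_complete
    {α β L : Type*} [DecidableEq α] [DecidableEq β] [DecidableEq L]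
    (Vq : Finset α) (Eq' : Finset (Finset α)) (lq : α → L)
    (VH : Finset β) (EH : Finset (Finset β)) (lH : β → L)
    (f : α → β)
    (hinj : Set.InjOn f ↑Vq)
    (hmap : ∀ u ∈ Vq, f u ∈ VH)
    (hlabel : ∀ u ∈ Vq, lH (f u) = lq u)
    (hedge_sub : ∀ e ∈ Eq', e ⊆ Vq)
    (hedge : ∀ e ∈ Eq', e.image f ∈ EH)
    (φ : List (Finset α)) (hperm : φ.Perm Eq'.toList)
    (i : ℕ) (hi : i < φ.length)
    (e_q : Finset α) (he_q : e_q = φ.get ⟨i, hi⟩) :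
    -- previously matched query hyperedges
    let prev : Finset (Finset α) := (φ.take i).toFinset
    -- the partial query `q'`: hyperedges matched up to and including step `i`
    let Q' : Finset (Finset α) := (φ.take (i + 1)).toFinset
    -- vertices of the partial embedding that are definitely non-incident to `f(e_q)`
    let Vn : Finset β :=
      (prev.filter (fun e => e ∩ e_q = ∅)).biUnion (fun e => e.image f)
    -- hyperedges of the matched partial hypergraph
    let M : Finset (Finset β) := Q'.image (fun e => e.image f)
    -- degree of a data vertex in the matched partial hypergraph
    let degM : β → ℕ := fun v => (M.filter (fun s => v ∈ s)).card
    -- degree of a query vertex in the partial query `q'`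
    let degQ : α → ℕ := fun u => (Q'.filter (fun e => u ∈ e)).card
    -- the candidate
    let c : Finset β := e_q.image f
    -- hyperedges of `H` incident to `v` with signature `S(e_q)`
    let he : β → Finset (Finset β) :=
      fun v => EH.filter (fun d => v ∈ d ∧ d.val.map lH = e_q.val.map lq)
    -- the per-vertex candidate vertex sets `V_incdt(e, u)`
    let Vinc : Finset α → α → Finset β := fun e u =>
      (e.image f).filter (fun v => v ∉ Vn ∧ lH v = lq u ∧ degM v = degQ u)
    -- (i) same signature
    (c.val.map lH = e_q.val.map lq) ∧
    -- (ii) no vertex of `V_{n_incdt}`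
    (∀ v ∈ c, v ∉ Vn) ∧
    -- (iii) witnesses for every previously matched adjacent hyperedge
    (∀ e ∈ prev, (e ∩ e_q).Nonempty → ∀ u ∈ e ∩ e_q,
      ∃ v ∈ e.image f, v ∈ c ∧ v ∉ Vn ∧ lH v = lq u ∧ degM v = degQ u) ∧
    -- (iv) membership in the computed candidate set `C(e_q)`
    (∀ e ∈ prev, ∀ u ∈ e ∩ e_q, c ∈ (Vinc e u).biUnion he) := by
  intro prev Q' Vn M degM degQ c he Vinc
  -- membership facts
  have hmemφ : ∀ e ∈ φ, e ∈ Eq' := fun e hh => by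
    have := hperm.mem_iff.mp hh
    simpa using this
  have heq_mem : e_q ∈ Eq' := hmemφ _ (he_q ▸ φ.get_mem ⟨i, hi⟩)
  have heq_sub : e_q ⊆ Vq := hedge_sub _ heq_mem
  have hprev_mem : ∀ e ∈ prev, e ∈ Eq' := fun e hh =>
    hmemφ _ (List.mem_of_mem_take (List.mem_toFinset.mp hh))
  have hQ'_mem : ∀ e ∈ Q', e ∈ Eq' := fun e hh =>
    hmemφ _ (List.mem_of_mem_take (List.mem_toFinset.mp hh))
  -- (i)
  have hsig : c.val.map lH = e_q.val.map lq := by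
    have h1 : c.val = e_q.val.map f :=
      Finset.image_val_of_injOn (hinj.mono (by exact_mod_cast heq_sub))
    rw [h1, Multiset.map_map]
    exact Multiset.map_congr rfl (fun u hu => hlabel u (heq_sub hu))
  -- (ii)
  have hVn : ∀ v ∈ c, v ∉ Vn := by
    intro v hv hvVn
    obtain ⟨u, hu, rfl⟩ := Finset.mem_image.mp hv
    obtain ⟨e, heP, hve⟩ := Finset.mem_biUnion.mp hvVn
    obtain ⟨heprev, hdisj⟩ := Finset.mem_filter.mp heP
    obtain ⟨w, hw, hwf⟩ := Finset.mem_image.mp hve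
    have hwVq : w ∈ Vq := hedge_sub _ (hprev_mem _ heprev) hw
    have : w = u := hinj hwVq (heq_sub hu) hwf
    subst this
    have : w ∈ e ∩ e_q := Finset.mem_inter.mpr ⟨hw, hu⟩
    simp [hdisj] at this
  -- degree equality
  have hdeg : ∀ u ∈ e_q, degM (f u) = degQ u := by
    intro u hu
    have huVq : u ∈ Vq := heq_sub hu
    have himg_inj : Set.InjOn (fun e => Finset.image f e) ↑Q' := by
      intro e1 h1 e2 h2 hEq
      apply Finset.coe_injective
      have h1' := hedge_sub _ (hQ'_mem _ h1)
      have h2' := hedge_sub _ (hQ'_mem _ h2)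
      have : f '' (e1 : Set α) = f '' (e2 : Set α) := by
        simpa [Finset.coe_image] using congrArg (fun s : Finset β => (s : Set β)) hEq
      exact Set.InjOn.image_eq_image_iff hinj
        (by exact_mod_cast h1') (by exact_mod_cast h2') |>.mp this
    have hM : M.filter (fun s => f u ∈ s)
        = (Q'.filter (fun e => u ∈ e)).image (fun e => e.image f) := by
      ext s
      simp only [Finset.mem_filter, Finset.mem_image, M]
      constructor
      · rintro ⟨⟨e, heQ, rfl⟩, hfu⟩
        refine ⟨e, ⟨heQ, ?_⟩, rfl⟩
        obtain ⟨w, hw, hwf⟩ := Finset.mem_image.mp hfu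
        have : w = u := hinj (hedge_sub _ (hQ'_mem _ heQ) hw) huVq hwf
        exact this ▸ hw
      · rintro ⟨e, ⟨heQ, hue⟩, rfl⟩
        exact ⟨⟨e, heQ, rfl⟩, Finset.mem_image_of_mem f hue⟩
    show (M.filter (fun s => f u ∈ s)).card = (Q'.filter (fun e => u ∈ e)).card
    rw [hM]
    exact Finset.card_image_of_injOn (himg_inj.mono (by
      intro x hx; exact (Finset.mem_filter.mp hx).1))
  refine ⟨hsig, hVn, ?_, ?_⟩
  · intro e heprev _ u hu
    obtain ⟨hue, hueq⟩ := Finset.mem_inter.mp hu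
    have hfc : f u ∈ c := Finset.mem_image_of_mem f hueq
    exact ⟨f u, Finset.mem_image_of_mem f hue, hfc, hVn _ hfc,
      hlabel u (heq_sub hueq), hdeg u hueq⟩
  · intro e heprev u hu
    obtain ⟨hue, hueq⟩ := Finset.mem_inter.mp hu
    have hfc : f u ∈ c := Finset.mem_image_of_mem f hueq
    refine Finset.mem_biUnion.mpr ⟨f u, ?_, ?_⟩
    · exact Finset.mem_filter.mpr ⟨Finset.mem_image_of_mem f hue,
        hVn _ hfc, hlabel u (heq_sub hueq), hdeg u hueq⟩
    · exact Finset.mem_filter.mpr ⟨hedge _ heq_mem, hfc, hsig⟩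
end
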